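/- In R′, each x_i is a root of the polynomial f(y) = y^n − σ_1y^{n−1} + σ_2y^{n−2} − ⋯ + (−1)^nσ_n: that is, for every i = 1,…,n one has ∑_{k=0}^{n} (−1)^k σ_k x_i^{n−k} = 0 in R′. -/

import Mathlib

open Finset

/-- The `k`-th elementary polynomial `σ_k` in the noncommuting variables
`x_1, …, x_n` of the free algebra `K⟨x_1,…,x_n⟩`. -/
noncomputable def elemPoly (K : Type*) [Field K] (n k : ℕ) : FreeAlgebra K (Fin n) :=
  ∑ s ∈ Finset.univ.powersetCard k, ((s.sort (· ≤ ·)).map (FreeAlgebra.ι K)).prod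

/-- The relation on the free algebra identifying `x_i * σ_k` with `σ_k * x_i`
for `1 ≤ i, k ≤ n`; the quotient `R′ = P/I` by the two-sided ideal `I` generated
by the commutators `[x_i, σ_k]` is `RingQuot` of this relation. -/
noncomputable def commRel (K : Type*) [Field K] (n : ℕ) :
    FreeAlgebra K (Fin n) → FreeAlgebra K (Fin n) → Prop :=
  fun a b => ∃ (i : Fin n) (k : ℕ), 1 ≤ k ∧ k ≤ n ∧
    a = FreeAlgebra.ι K i * elemPoly K n k ∧ b = elemPoly K n k * FreeAlgebra.ι K i

/-- The quotient ring `R′ = P/I`. -/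
noncomputable abbrev Rquot (K : Type*) [Field K] (n : ℕ) := RingQuot (commRel K n)

/-- The quotient map `P → R′`. -/
noncomputable def mkR (K : Type*) [Field K] (n : ℕ) :
    FreeAlgebra K (Fin n) →ₐ[K] Rquot K n :=
  RingQuot.mkAlgHom K (commRel K n)

/-- The image in `R′` of the generator `x_i`. -/
noncomputable def XR (K : Type*) [Field K] (n : ℕ) (i : Fin n) : Rquot K n :=
  mkR K n (FreeAlgebra.ι K i)

open PowerSeries


section NCE
variable {S : Type*} [Ring S]

/-- Noncommutative elementary symmetric function of a list. -/
def nce : List S → ℕ → S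
  | _, 0 => 1
  | [], _ + 1 => 0
  | a :: l, k + 1 => nce l (k + 1) + a * nce l k

@[simp] lemma nce_zero (l : List S) : nce l 0 = 1 := by cases l <;> rfl

@[simp] lemma nce_nil_succ (k : ℕ) : nce ([] : List S) (k + 1) = 0 := rfl

@[simp] lemma nce_cons_succ (a : S) (l : List S) (k : ℕ) :
    nce (a :: l) (k + 1) = nce l (k + 1) + a * nce l k := rfl

lemma nce_eq_zero : ∀ (l : List S) (k : ℕ), l.length < k → nce l k = 0
  | [], k + 1, _ => rfl
  | a :: l, k + 1, h => by
      have h2 : l.length < k := by simp at h; omega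
      have h1 : l.length < k + 1 := Nat.lt_succ_of_lt h2
      simp [nce_eq_zero l (k + 1) h1, nce_eq_zero l k h2]

lemma map_nce {S' : Type*} [Ring S'] (φ : S →+* S') :
    ∀ (l : List S) (k : ℕ), nce (l.map φ) k = φ (nce l k)
  | [], 0 => by simp
  | [], k + 1 => by simp
  | a :: l, 0 => by simp
  | a :: l, k + 1 => by
      simp [map_nce φ l (k + 1), map_nce φ l k]

end NCE

section Lin
variable {S : Type*} [Ring S]

/-- `1 + y·t` as a power series. -/
noncomputable def lin (y : S) : S⟦X⟧ := 1 + PowerSeries.C y * X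

/-- Geometric series `∑ (-y)^m t^m`, the inverse of `lin y`. -/
noncomputable def geom (y : S) : S⟦X⟧ := PowerSeries.mk fun m => (-y) ^ m

lemma lin_mul_geom (y : S) : lin y * geom y = 1 := by
  have : lin y * geom y = geom y + PowerSeries.C y * (X * geom y) := by
    rw [lin, add_mul, one_mul, mul_assoc]
  rw [this]
  ext m
  cases m with
  | zero => simp [geom, coeff_C_mul, coeff_zero_X_mul]
  | succ m =>
      simp [geom, coeff_C_mul, coeff_succ_X_mul, coeff_one, pow_succ', neg_mul]

lemma geom_mul_lin (y : S) : geom y * lin y = 1 := by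
  have : geom y * lin y = geom y + (geom y * PowerSeries.C y) * X := by
    rw [lin, mul_add, mul_one, mul_assoc]
  rw [this]
  ext m
  cases m with
  | zero => simp [geom, coeff_zero_mul_X]
  | succ m =>
      simp [geom, coeff_succ_mul_X, coeff_mul_C, coeff_one, pow_succ, mul_neg]

/-- `lin y` as a unit of the power series ring. -/
noncomputable def linU (y : S) : (S⟦X⟧)ˣ := ⟨lin y, geom y, lin_mul_geom y, geom_mul_lin y⟩

lemma prodLin_eq (l : List S) : (l.map lin).prod = PowerSeries.mk (nce l) := by
  induction l with
  | nil =>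
      ext m; cases m <;> simp
  | cons a l ih =>
      rw [List.map_cons, List.prod_cons, ih, lin, add_mul, one_mul]
      ext m
      cases m with
      | zero => simp [mul_assoc, coeff_C_mul, coeff_zero_X_mul]
      | succ m => simp [mul_assoc, coeff_C_mul, coeff_succ_X_mul]

lemma val_prod_linU (l : List S) : (((l.map linU).prod : (S⟦X⟧)ˣ) : S⟦X⟧) = (l.map lin).prod := by
  induction l with
  | nil => simp
  | cons a l ih => simp [ih]; rfl

end Lin
section Commute
variable {S : Type*} [Ring S]

open PowerSeries

lemma commute_of_coeff_commute {f h : S⟦X⟧}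
    (hc : ∀ p q, Commute ((coeff p) f) ((coeff q) h)) : Commute f h := by
  show f * h = h * f
  ext m
  rw [coeff_mul, coeff_mul]
  conv_rhs => rw [← Finset.HasAntidiagonal.map_swap_antidiagonal]
  rw [Finset.sum_map]
  exact Finset.sum_congr rfl fun p _ => by simpa using (hc p.1 p.2).eq

lemma coeff_lin (y : S) (q : ℕ) :
    (coeff q) (lin y) = if q = 0 then 1 else if q = 1 then y else 0 := by
  rcases q with _ | _ | q <;> simp [lin, coeff_one, coeff_C_mul, coeff_X]

lemma units_conj {M : Type*} [Monoid M] (A L B : Mˣ) (g : M)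
    (hg : g = ↑A * ↑L * ↑B) (hA : Commute g ↑A) (hL : Commute g ↑L) :
    g = ↑B * ↑A * ↑L := by
  have h1 : ((A * L : Mˣ) : M) * (↑B * ↑A * ↑L) = ((A * L : Mˣ) : M) * g := by
    rw [Units.val_mul]
    calc (↑A * ↑L : M) * (↑B * ↑A * ↑L) = (↑A * ↑L * ↑B) * (↑A * ↑L) := by
          simp [mul_assoc]
      _ = g * (↑A * ↑L) := by rw [← hg]
      _ = ↑A * (g * ↑L) := by rw [← mul_assoc, hA.eq, mul_assoc]
      _ = (↑A * ↑L) * g := by rw [hL.eq, mul_assoc]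
  exact ((Units.mul_right_inj (A * L)).1 h1).symm

end Commute
section SortSec
variable {S : Type*} [Ring S] {α : Type*} [LinearOrder α]

lemma nce_sort (s : Finset α) (φ : α → S) :
    ∀ k : ℕ, nce ((s.sort (· ≤ ·)).map φ) k
      = ∑ u ∈ s.powersetCard k, ((u.sort (· ≤ ·)).map φ).prod := by
  classical
  induction s using Finset.induction_on_min with
  | empty =>
      intro k
      cases k with
      | zero => simp
      | succ k =>
          rw [Finset.powersetCard_eq_empty.2 (by simp)]
          simp
  | insert a s ha ih =>
      intro k
      have hans : a ∉ s := fun h => lt_irrefl a (ha a h)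
      rw [Finset.sort_insert (· ≤ ·) (fun b hb => (ha b hb).le) hans, List.map_cons]
      cases k with
      | zero => simp
      | succ k =>
          rw [nce_cons_succ, ih (k + 1), ih k,
            Finset.powersetCard_succ_insert hans]
          have hdisj : Disjoint (s.powersetCard (k + 1))
              ((s.powersetCard k).image (insert a)) := by
            rw [Finset.disjoint_left]
            intro u hu hu'
            obtain ⟨hus, _⟩ := Finset.mem_powersetCard.1 hu
            obtain ⟨v, hv, rfl⟩ := Finset.mem_image.1 hu'
            exact hans (hus (Finset.mem_insert_self a v))
          rw [Finset.sum_union hdisj]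
          congr 1
          rw [Finset.sum_image]
          · rw [Finset.mul_sum]
            refine Finset.sum_congr rfl fun u hu => ?_
            obtain ⟨hus, _⟩ := Finset.mem_powersetCard.1 hu
            have hau : a ∉ u := fun h => hans (hus h)
            rw [Finset.sort_insert (· ≤ ·) (fun b hb => (ha b (hus hb)).le) hau,
              List.map_cons, List.prod_cons]
          · intro u hu v hv huv
            obtain ⟨hus, _⟩ := Finset.mem_powersetCard.1 hu
            obtain ⟨hvs, _⟩ := Finset.mem_powersetCard.1 hv
            have hau : a ∉ u := fun h => hans (hus h)
            have hav : a ∉ v := fun h => hans (hvs h)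
            rw [← Finset.erase_insert hau, ← Finset.erase_insert hav, huv]

end SortSec
lemma telescope {S : Type*} [Ring S] (n : ℕ) (σ c : ℕ → S) (x : S)
    (h0 : σ 0 = c 0) (hrec : ∀ k, σ (k + 1) = c (k + 1) + c k * x) (hcn : c n = 0) :
    ∑ k ∈ Finset.range (n + 1), (-1 : S) ^ k * σ k * x ^ (n - k) = 0 := by
  have h5 := congrArg (· + ((-1 : S) ^ 0 * c 0 * x ^ (n - 0)))
    (Finset.sum_range_sub (fun k => (-1 : S) ^ k * c k * x ^ (n - k)) n)
  calc ∑ k ∈ Finset.range (n + 1), (-1 : S) ^ k * σ k * x ^ (n - k)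
      = ∑ k ∈ Finset.range n, ((-1 : S) ^ (k + 1) * σ (k + 1) * x ^ (n - (k + 1)))
        + (-1 : S) ^ 0 * σ 0 * x ^ (n - 0) := Finset.sum_range_succ' _ n
    _ = ∑ k ∈ Finset.range n, ((-1 : S) ^ (k + 1) * c (k + 1) * x ^ (n - (k + 1))
          - (-1 : S) ^ k * c k * x ^ (n - k))
        + (-1 : S) ^ 0 * c 0 * x ^ (n - 0) := by
        rw [h0]
        refine congrArg (· + ((-1 : S) ^ 0 * c 0 * x ^ (n - 0)))
          (Finset.sum_congr rfl fun k hk => ?_)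
        have hk' : k < n := Finset.mem_range.1 hk
        have hxp : x * x ^ (n - (k + 1)) = x ^ (n - k) := by
          rw [← pow_succ']
          congr 1
          omega
        rw [hrec k, pow_succ, mul_neg_one, ← hxp]
        noncomm_ring
    _ = ((-1 : S) ^ n * c n * x ^ (n - n) - (-1 : S) ^ 0 * c 0 * x ^ (n - 0))
        + (-1 : S) ^ 0 * c 0 * x ^ (n - 0) := h5
    _ = 0 := by rw [hcn]; simp

open PowerSeries in
/-- In `R′`, each `x_i` is a root of
`f(y) = y^n − σ_1 y^{n−1} + σ_2 y^{n−2} − ⋯ + (−1)^n σ_n`: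
`∑_{k=0}^{n} (−1)^k σ_k x_i^{n−k} = 0`. -/
theorem generators_are_roots
    (K : Type*) [Field K] [CharZero K] (n : ℕ) (hn : 3 ≤ n) (i : Fin n) :
    ∑ k ∈ Finset.range (n + 1),
      (-1 : Rquot K n) ^ k * mkR K n (elemPoly K n k) * XR K n i ^ (n - k) = 0 := by
  classical
  set x : Rquot K n := XR K n i with hxdef
  -- the list of all generators, in order
  obtain ⟨l₁, l₂, hsplit⟩ :=
    List.append_of_mem ((Finset.mem_sort (α := Fin n) (· ≤ ·)).2 (Finset.mem_univ i))
  set xl : List (Rquot K n) := ((Finset.univ : Finset (Fin n)).sort (· ≤ ·)).map (XR K n)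
    with hxldef
  -- σ_k in the quotient is nce of the list of generators
  have hkey : ∀ k, mkR K n (elemPoly K n k) = nce xl k := by
    intro k
    have h1 : elemPoly K n k
        = nce (((Finset.univ : Finset (Fin n)).sort (· ≤ ·)).map (FreeAlgebra.ι K)) k :=
      (nce_sort _ _ k).symm
    rw [h1, show mkR K n (nce (((Finset.univ : Finset (Fin n)).sort (· ≤ ·)).map
        (FreeAlgebra.ι K)) k) = (mkR K n).toRingHom (nce (((Finset.univ : Finset (Fin n)).sort
        (· ≤ ·)).map (FreeAlgebra.ι K)) k) from rfl, ← map_nce, hxldef, List.map_map]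
    rfl
  -- the commutation relations
  have hcomm : ∀ (j : Fin n) (k : ℕ), Commute (nce xl k) (XR K n j) := by
    intro j k
    rcases k with _ | k
    · rw [nce_zero]; exact Commute.one_left _
    · rw [← hkey]
      by_cases hk : k + 1 ≤ n
      · have hrel : commRel K n (FreeAlgebra.ι K j * elemPoly K n (k + 1))
            (elemPoly K n (k + 1) * FreeAlgebra.ι K j) :=
          ⟨j, k + 1, Nat.succ_le_succ (Nat.zero_le k), hk, rfl, rfl⟩
        have h2 := RingQuot.mkAlgHom_rel K hrel
        rw [map_mul, map_mul] at h2
        exact Commute.symm h2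
      · have h0 : elemPoly K n (k + 1) = 0 := by
          rw [elemPoly, Finset.powersetCard_eq_empty.2
            (by rw [Finset.card_univ, Fintype.card_fin]; omega), Finset.sum_empty]
        rw [h0, map_zero]
        exact Commute.zero_left _
  -- the generating power series
  set g : (Rquot K n)⟦X⟧ := PowerSeries.mk (nce xl) with hgdef
  have hglin : ∀ j : Fin n, Commute g (lin (XR K n j)) := by
    intro j
    apply commute_of_coeff_commute
    intro p q
    rw [hgdef]
    have hcoe : (coeff p) (PowerSeries.mk (nce xl)) = nce xl p := coeff_mk p _
    rw [coeff_lin, hcoe]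
    split_ifs
    · exact Commute.one_right _
    · exact hcomm j p
    · exact Commute.zero_right _
  -- units
  set A : ((Rquot K n)⟦X⟧)ˣ := ((l₁.map (XR K n)).map linU).prod with hAdef
  set B : ((Rquot K n)⟦X⟧)ˣ := ((l₂.map (XR K n)).map linU).prod with hBdef
  set L : ((Rquot K n)⟦X⟧)ˣ := linU x with hLdef
  have hAval : (A : (Rquot K n)⟦X⟧) = ((l₁.map (XR K n)).map lin).prod := val_prod_linU _
  have hBval : (B : (Rquot K n)⟦X⟧) = ((l₂.map (XR K n)).map lin).prod := val_prod_linU _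
  have hLval : (L : (Rquot K n)⟦X⟧) = lin x := rfl
  have hxl2 : xl = (l₁.map (XR K n)) ++ x :: (l₂.map (XR K n)) := by
    rw [hxldef, hsplit, List.map_append, List.map_cons]
  have hfac : g = ↑A * ↑L * ↑B := by
    rw [hAval, hBval, hLval, hgdef, ← prodLin_eq, hxl2, List.map_append, List.map_cons,
      List.prod_append, List.prod_cons, mul_assoc]
  have hgA : Commute g ↑A := by
    rw [hAval]
    apply Commute.list_prod_right
    intro z hz
    rw [List.map_map, List.mem_map] at hz
    obtain ⟨j, -, rfl⟩ := hz
    exact hglin j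
  have hgL : Commute g ↑L := hglin i
  have hmain := units_conj A L B g hfac hgA hgL
  -- coefficients of B * A
  set c : ℕ → Rquot K n := fun m => ∑ p ∈ Finset.HasAntidiagonal.antidiagonal m,
    nce (l₂.map (XR K n)) p.1 * nce (l₁.map (XR K n)) p.2 with hcdef
  have hBA : ((B : (Rquot K n)⟦X⟧) * ↑A) = PowerSeries.mk c := by
    rw [hBval, hAval, prodLin_eq, prodLin_eq]
    ext m
    rw [coeff_mul, coeff_mk]
    simp [hcdef, coeff_mk]
  rw [hBA] at hmain
  -- lengths
  have hlen : l₁.length + l₂.length + 1 = n := by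
    have h3 := Finset.length_sort (α := Fin n) (· ≤ ·) (s := Finset.univ)
    rw [hsplit] at h3
    simp only [List.length_append, List.length_cons, Finset.card_univ, Fintype.card_fin] at h3
    omega
  have hcz : c n = 0 := by
    rw [hcdef]
    apply Finset.sum_eq_zero
    intro p hp
    rw [Finset.HasAntidiagonal.mem_antidiagonal] at hp
    by_cases h1 : l₂.length < p.1
    · rw [nce_eq_zero _ _ (by rwa [List.length_map]), zero_mul]
    · rw [nce_eq_zero (l₁.map (XR K n)) p.2 (by rw [List.length_map]; omega), mul_zero]
  -- the recursion for σ in terms of c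
  have hmain2 : g = PowerSeries.mk c + (PowerSeries.mk c * PowerSeries.C x) * X := by
    rw [hmain, hLval, lin, mul_add, mul_one, mul_assoc]
  have hrec0 : mkR K n (elemPoly K n 0) = c 0 := by
    have h4 := congrArg (coeff 0) hmain2
    rw [hgdef, coeff_mk, map_add, coeff_mk, coeff_zero_mul_X, add_zero] at h4
    rw [hkey, h4]
  have hrec : ∀ k, mkR K n (elemPoly K n (k + 1)) = c (k + 1) + c k * x := by
    intro k
    have h4 := congrArg (coeff (k + 1)) hmain2
    rw [hgdef, coeff_mk, map_add, coeff_mk, coeff_succ_mul_X, coeff_mul_C, coeff_mk] at h4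
    rw [hkey, h4]
  -- telescoping
  exact telescope n (fun k => mkR K n (elemPoly K n k)) c x hrec0 hrec hcz
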